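/- For every integer n ≥ 1, one has n^{1/2} · Γ(1 + n/2)^{1/n} / (Γ(1 + 1/2) · Γ(n+1)^{1/n}) ≥ 1, where Γ denotes the Euler Gamma function. -/

import Mathlib

open Real

lemma gamma_three_halves : Real.Gamma (1 + 1/2) = Real.sqrt π / 2 := by
  rw [show (1 + 1/2 : ℝ) = 1/2 + 1 by ring, Real.Gamma_add_one (by norm_num),
    Real.Gamma_one_half_eq]
  ring

lemma step_poly {m : ℝ} (hm : 2 ≤ m) :
    π/4 * ((m+2)*(m+1)) * m ^ (m/2) ≤ (m+2) ^ ((m+2)/2) * (1+m/2) := by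
  have hm0 : (0:ℝ) < m := by linarith
  have hA : (0:ℝ) ≤ m ^ (m/2) := Real.rpow_nonneg hm0.le _
  have h1 : m ^ (m/2) * (1+2/m) ^ (m/2) * (m+2) = (m+2) ^ ((m+2)/2) := by
    rw [← Real.mul_rpow hm0.le (by positivity),
      show m * (1+2/m) = m+2 by field_simp,
      show (m+2)/2 = m/2 + 1 by ring, Real.rpow_add (by linarith), Real.rpow_one]
  have h2 : (2:ℝ) ≤ (1+2/m) ^ (m/2) := by
    have hs : (-1:ℝ) ≤ 2/m := by
      have : (0:ℝ) < 2/m := by positivity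
      linarith
    have h := one_add_mul_self_le_rpow_one_add (s := 2/m) hs (p := m/2) (by linarith)
    have e : 1 + m/2 * (2/m) = 2 := by field_simp; norm_num
    rw [e] at h
    exact h
  have h4 : π/4 * ((m+2)*(m+1)) ≤ (m+2)*(m+2) := by
    nlinarith [Real.pi_le_four, mul_pos (show (0:ℝ) < m+2 by linarith) (show (0:ℝ) < m+1 by linarith)]
  calc π/4 * ((m+2)*(m+1)) * m ^ (m/2)
      ≤ (m+2)*(m+2) * m ^ (m/2) := mul_le_mul_of_nonneg_right h4 hA
    _ = m ^ (m/2) * 2 * ((m+2) * (1+m/2)) := by ring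
    _ ≤ m ^ (m/2) * (1+2/m) ^ (m/2) * ((m+2) * (1+m/2)) := by
        have hpos : (0:ℝ) ≤ (m+2) * (1+m/2) := by nlinarith
        have : m ^ (m/2) * 2 ≤ m ^ (m/2) * (1+2/m) ^ (m/2) :=
          mul_le_mul_of_nonneg_left h2 hA
        exact mul_le_mul_of_nonneg_right this hpos
    _ = (m+2) ^ ((m+2)/2) * (1+m/2) := by rw [← h1]; ring

lemma key : ∀ n : ℕ, 1 ≤ n →
    (Real.sqrt π / 2) ^ n * Real.Gamma ((n : ℝ) + 1) ≤
      (n : ℝ) ^ ((n : ℝ) / 2) * Real.Gamma (1 + (n : ℝ) / 2) := by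
  have hsπ : Real.sqrt π ^ 2 = π := Real.sq_sqrt Real.pi_pos.le
  have base2 : (Real.sqrt π / 2) ^ 2 * Real.Gamma ((2 : ℝ) + 1) ≤
      (2 : ℝ) ^ ((2 : ℝ) / 2) * Real.Gamma (1 + (2 : ℝ) / 2) := by
    rw [Real.Gamma_add_one (by norm_num), Real.Gamma_two,
      show (1 + (2:ℝ)/2) = 2 by norm_num, Real.Gamma_two,
      show ((2:ℝ)/2) = 1 by norm_num, Real.rpow_one]
    nlinarith [Real.pi_le_four, Real.pi_pos]
  have base3 : (Real.sqrt π / 2) ^ 3 * Real.Gamma ((3 : ℝ) + 1) ≤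
      (3 : ℝ) ^ ((3 : ℝ) / 2) * Real.Gamma (1 + (3 : ℝ) / 2) := by
    have hΓ4 : Real.Gamma ((3:ℝ) + 1) = 6 := by
      rw [show ((3:ℝ)+1) = ((3:ℕ):ℝ)+1 by norm_num, Real.Gamma_nat_eq_factorial]
      norm_num [Nat.factorial]
    have hΓ32 : Real.Gamma (3/2 : ℝ) = Real.sqrt π / 2 := by
      have := gamma_three_halves; rwa [show (1 + 1/2 : ℝ) = 3/2 by norm_num] at this
    have hΓ52 : Real.Gamma (1 + (3:ℝ)/2) = 3/4 * Real.sqrt π := by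
      rw [show (1 + (3:ℝ)/2) = 3/2 + 1 by ring, Real.Gamma_add_one (by norm_num), hΓ32]
      ring
    have h32 : (4:ℝ) ≤ (3:ℝ) ^ ((3:ℝ)/2) := by
      rw [show ((3:ℝ)/2) = (3:ℕ) * (1/2 : ℝ) by norm_num,
        Real.rpow_natCast_mul (by norm_num), ← Real.sqrt_eq_rpow]
      rw [show ((3:ℝ)^(3:ℕ)) = 27 by norm_num, show (4:ℝ) = Real.sqrt 16 by
        rw [show (16:ℝ) = 4^2 by norm_num, Real.sqrt_sq (by norm_num)]]
      exact Real.sqrt_le_sqrt (by norm_num)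
    rw [hΓ4, hΓ52]
    have hsq : (0:ℝ) ≤ Real.sqrt π := Real.sqrt_nonneg _
    have hπ4 : π ≤ 4 := Real.pi_le_four
    nlinarith [mul_le_mul_of_nonneg_right (le_trans hπ4 h32) hsq]
  intro n
  induction n using Nat.twoStepInduction with
  | zero => omega
  | one =>
    intro _
    simp only [Nat.cast_one]
    rw [show ((1:ℝ)+1) = 2 by norm_num, Real.Gamma_two, Real.one_rpow,
      show (1 + (1:ℝ)/2) = 1/2 + 1 by ring, Real.Gamma_add_one (by norm_num),
      Real.Gamma_one_half_eq]
    ring_nf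
    linarith
  | more n ih _ =>
    intro _
    rcases Nat.lt_or_ge n 2 with hn2 | hn2
    · interval_cases n
      · exact_mod_cast base2
      · exact_mod_cast base3
    · have ih' := ih (by omega)
      set m : ℝ := (n : ℝ) with hm
      have hm2 : (2:ℝ) ≤ m := by rw [hm]; exact_mod_cast hn2
      have hm0 : (0:ℝ) < m := by linarith
      have hcast : ((n + 2 : ℕ) : ℝ) = m + 2 := by push_cast [hm]; ring
      rw [hcast]
      have hΓ3 : Real.Gamma (m + 2 + 1) = (m+2) * ((m+1) * Real.Gamma (m+1)) := by
        rw [show m + 2 + 1 = (m+2) + 1 by ring, Real.Gamma_add_one (by linarith),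
          show m + 2 = (m+1) + 1 by ring, Real.Gamma_add_one (by linarith)]
      have hΓh : Real.Gamma (1 + (m+2)/2) = (1 + m/2) * Real.Gamma (1 + m/2) := by
        rw [show 1 + (m+2)/2 = (1 + m/2) + 1 by ring, Real.Gamma_add_one (by positivity)]
      rw [hΓ3, hΓh, pow_add]
      have hsq2 : (Real.sqrt π / 2) ^ 2 = π / 4 := by
        rw [div_pow, hsπ]; norm_num
      rw [hsq2]
      have hΓpos : 0 < Real.Gamma (1 + m/2) := Real.Gamma_pos_of_pos (by positivity)
      have hIH : (Real.sqrt π / 2) ^ n * Real.Gamma (m + 1) ≤ m ^ (m/2) * Real.Gamma (1 + m/2) := ih'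
      have hsp := step_poly hm2
      calc (Real.sqrt π / 2) ^ n * (π/4) * ((m+2) * ((m+1) * Real.Gamma (m+1)))
          = π/4 * ((m+2)*(m+1)) * ((Real.sqrt π / 2) ^ n * Real.Gamma (m+1)) := by ring
        _ ≤ π/4 * ((m+2)*(m+1)) * (m ^ (m/2) * Real.Gamma (1 + m/2)) := by
            apply mul_le_mul_of_nonneg_left hIH
            exact mul_nonneg (by positivity) (mul_nonneg (by linarith) (by linarith))
        _ = (π/4 * ((m+2)*(m+1)) * m ^ (m/2)) * Real.Gamma (1 + m/2) := by ring
        _ ≤ ((m+2) ^ ((m+2)/2) * (1+m/2)) * Real.Gamma (1 + m/2) :=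
            mul_le_mul_of_nonneg_right hsp hΓpos.le
        _ = (m+2) ^ ((m+2)/2) * ((1 + m/2) * Real.Gamma (1 + m/2)) := by ring

/-- For every integer `n ≥ 1`,
`n^(1/2) · Γ(1+n/2)^(1/n) / (Γ(1+1/2) · Γ(n+1)^(1/n)) ≥ 1`. -/
theorem gamma_half_ineq (n : ℕ) (hn : 1 ≤ n) :
    (n : ℝ) ^ ((1 : ℝ) / 2) * Real.Gamma (1 + (n : ℝ) / 2) ^ (1 / (n : ℝ)) /
        (Real.Gamma (1 + 1 / 2) * Real.Gamma ((n : ℝ) + 1) ^ (1 / (n : ℝ))) ≥ 1 := by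
  have hn0 : n ≠ 0 := by omega
  have hn0' : (0:ℝ) < n := by positivity
  have hB : 0 < Real.Gamma (1 + (n : ℝ) / 2) := Real.Gamma_pos_of_pos (by positivity)
  have hD : 0 < Real.Gamma ((n : ℝ) + 1) := Real.Gamma_pos_of_pos (by positivity)
  have hC : 0 < Real.Gamma (1 + 1/2 : ℝ) := Real.Gamma_pos_of_pos (by norm_num)
  have hdenom : 0 < Real.Gamma (1 + 1/2 : ℝ) * Real.Gamma ((n : ℝ) + 1) ^ (1 / (n : ℝ)) := by
    positivity
  rw [ge_iff_le, le_div_iff₀ hdenom, one_mul]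
  -- raise to the n-th power
  have hle : (Real.Gamma (1 + 1/2 : ℝ) * Real.Gamma ((n : ℝ) + 1) ^ (1 / (n : ℝ))) ^ n ≤
      ((n : ℝ) ^ ((1 : ℝ) / 2) * Real.Gamma (1 + (n : ℝ) / 2) ^ (1 / (n : ℝ))) ^ n := by
    rw [mul_pow, mul_pow, show (1/(n:ℝ)) = ((n:ℝ))⁻¹ from one_div _, Real.rpow_inv_natCast_pow hD.le hn0,
      Real.rpow_inv_natCast_pow hB.le hn0]
    have h1 : ((n:ℝ) ^ ((1:ℝ)/2)) ^ n = (n:ℝ) ^ ((n:ℝ)/2) := by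
      rw [← Real.rpow_natCast ((n:ℝ) ^ ((1:ℝ)/2)) n, ← Real.rpow_mul hn0'.le]
      ring_nf
    rw [h1, gamma_three_halves]
    exact key n hn
  have h1 : 0 ≤ Real.Gamma (1 + 1/2 : ℝ) * Real.Gamma ((n : ℝ) + 1) ^ (1 / (n : ℝ)) :=
    hdenom.le
  have h2 : 0 ≤ (n : ℝ) ^ ((1 : ℝ) / 2) * Real.Gamma (1 + (n : ℝ) / 2) ^ (1 / (n : ℝ)) := by
    positivity
  exact le_of_pow_le_pow_left₀ hn0 h2 hle
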